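/- Fix positive integers k, m = k−r+1, n = r−1, l. The system of linear equations Σ_{j=0}^{l} (−1)^{m+i−j} C(m+n, m+i−j) x_j = 1 for i = 0, 1, …, l has a unique solution (x₀,…,x_l) in ℂ, because the coefficient matrix ((−1)^{m+i−j} C(m+n, m+i−j))_{0≤i,j≤l} is invertible. -/

import Mathlib

open Polynomial

lemma few_terms : ∀ (N : ℕ) (p : Polynomial ℂ), p.support.card ≤ N →
    (X - 1) ^ N ∣ p → p = 0 := by
  intro N
  induction N with
  | zero =>
    intro p hc _
    simpa [Finset.card_eq_zero, Polynomial.support_eq_empty] using Nat.le_zero.mp hc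
  | succ N ih =>
    intro p hc hdvd
    by_contra hp
    obtain ⟨s, hs⟩ := Finset.Nonempty.exists_mem (Polynomial.nonempty_support_iff.mpr hp)
    set q : Polynomial ℂ := X * derivative p - C (s : ℂ) * p with hq
    have hcoeff : ∀ e : ℕ, q.coeff e = ((e : ℂ) - s) * p.coeff e := by
      intro e
      cases e with
      | zero => simp [hq, coeff_derivative]
      | succ e =>
        simp [hq, coeff_derivative, coeff_X_mul]
        ring
    have hqsupp : q.support ⊆ p.support.erase s := by
      intro e he
      rw [mem_support_iff, hcoeff] at he
      rcases mul_ne_zero_iff.mp he with ⟨h1, h2⟩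
      refine Finset.mem_erase.mpr ⟨?_, mem_support_iff.mpr h2⟩
      rintro rfl; simp at h1
    have hqcard : q.support.card ≤ N := by
      calc q.support.card ≤ (p.support.erase s).card := Finset.card_le_card hqsupp
        _ ≤ p.support.card - 1 := le_of_eq (Finset.card_erase_of_mem hs)
        _ ≤ N := by omega
    have hqdvd : (X - 1) ^ N ∣ q := by
      obtain ⟨g, hg⟩ := hdvd
      have hd : derivative p = (X-1)^N * (C ((N:ℂ)+1) * g + (X-1) * derivative g) := by
        rw [hg, derivative_mul, derivative_pow]
        push_cast
        simp
        ring
      rw [hq, hd, hg]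
      exact dvd_sub ((dvd_mul_right _ _).mul_left X)
        (((pow_dvd_pow _ (Nat.le_succ N)).mul_right g).mul_left _)
    have hq0 : q = 0 := ih q hqcard hqdvd
    -- so p is a monomial c * X^s
    have hmono : ∀ e : ℕ, e ≠ s → p.coeff e = 0 := by
      intro e he
      have := hcoeff e
      rw [hq0] at this
      have h1 : ((e : ℂ) - s) ≠ 0 := by
        simpa [sub_eq_zero] using he
      rw [Polynomial.coeff_zero] at this
      exact (mul_eq_zero.mp this.symm).resolve_left h1
    have heval : p.eval 1 = 0 := by
      obtain ⟨g, hg⟩ := hdvd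
      rw [hg]; simp
    have : p.eval 1 = p.coeff s := by
      rw [Polynomial.eval_eq_sum_range]
      rw [Finset.sum_eq_single s (fun e _ he => by simp [hmono e he])
        (fun hns => absurd (Finset.mem_range.mpr
          (Nat.lt_succ_of_le (Polynomial.le_natDegree_of_ne_zero (mem_support_iff.mp hs)))) hns)]
      simp
    rw [heval] at this
    exact (mem_support_iff.mp hs) this.symm

/-- The `(l+1) × (l+1)` coefficient matrix with `(i,j)` entry
`(-1)^(m+i-j) C(m+n, m+i-j)` (indices `0 ≤ i, j ≤ l`), the binomial coefficient
being `0` when `m + i - j < 0`. -/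
noncomputable def coefMat (m n l : ℕ) : Matrix (Fin (l + 1)) (Fin (l + 1)) ℂ :=
  Matrix.of fun i j : Fin (l + 1) =>
    if (j : ℕ) ≤ m + (i : ℕ) then
      (-1 : ℂ) ^ (m + (i : ℕ) - (j : ℕ)) * ((m + n).choose (m + (i : ℕ) - (j : ℕ)) : ℂ)
    else 0

lemma coeff_X_sub_one_pow (K s : ℕ) :
    ((X - 1 : ℂ[X]) ^ K).coeff s = (-1) ^ K * ((-1) ^ s * (K.choose s : ℂ)) := by
  have h1 : (X - 1 : ℂ[X]) = X + C (-1) := by simp [sub_eq_add_neg]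
  rw [h1, coeff_X_add_C_pow]
  by_cases h : s ≤ K
  · have h2 := pow_add (-1 : ℂ) (K - s) s
    rw [Nat.sub_add_cancel h] at h2
    have h3 : ((-1 : ℂ) ^ s) * ((-1) ^ s) = 1 := by
      rw [← pow_add, ← two_mul, pow_mul]; norm_num
    calc ((-1:ℂ)) ^ (K - s) * (K.choose s : ℂ)
        = ((-1:ℂ)) ^ (K - s) * (((-1:ℂ)^s * (-1)^s) * (K.choose s : ℂ)) := by rw [h3]; ring
      _ = (-1) ^ K * ((-1) ^ s * (K.choose s : ℂ)) := by rw [h2]; ring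
  · rw [Nat.choose_eq_zero_of_lt (by omega)]
    simp

lemma ker_triv (m n l : ℕ) (v : Fin (l + 1) → ℂ)
    (hv : ∀ i : Fin (l + 1), ∑ j : Fin (l + 1), coefMat m n l i j * v j = 0) :
    v = 0 := by
  set K := m + n with hK
  set q : ℂ[X] := ∑ j : Fin (l + 1), C (v j) * X ^ (j : ℕ) with hq
  set p : ℂ[X] := (X - 1) ^ K * q with hp
  -- window coefficients vanish
  have hwin : ∀ i : Fin (l + 1), p.coeff (m + (i : ℕ)) = 0 := by
    intro i
    have : p = ∑ j : Fin (l + 1), ((X - 1) ^ K * C (v j)) * X ^ (j : ℕ) := by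
      rw [hp, hq, Finset.mul_sum]
      congr 1; funext j; ring
    rw [this, Polynomial.finset_sum_coeff]
    have hterm : ∀ j : Fin (l + 1),
        (((X - 1 : ℂ[X]) ^ K * C (v j)) * X ^ (j : ℕ)).coeff (m + (i : ℕ))
          = (-1) ^ K * (coefMat m n l i j * v j) := by
      intro j
      rw [Polynomial.coeff_mul_X_pow', Polynomial.coeff_mul_C, coeff_X_sub_one_pow]
      simp only [coefMat, Matrix.of_apply]
      split_ifs with h
      · ring
      · ring
    rw [Finset.sum_congr rfl (fun j _ => hterm j), ← Finset.mul_sum, hv i, mul_zero]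
  -- degree bound
  have hdeg : p.natDegree ≤ K + l := by
    refine le_trans (Polynomial.natDegree_mul_le) (add_le_add ?_ ?_)
    · exact le_trans (Polynomial.natDegree_pow_le)
        (by simpa using Nat.mul_le_mul_left K (Polynomial.natDegree_X_sub_C_le (1:ℂ)))
    · refine Polynomial.natDegree_sum_le_of_forall_le _ _ (fun j _ => ?_)
      refine le_trans (Polynomial.natDegree_C_mul_le _ _) ?_
      simpa using Nat.le_of_lt_succ j.isLt
  -- support bound
  have hsupp : p.support ⊆ Finset.range m ∪ Finset.Ico (m + l + 1) (K + l + 1) := by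
    intro e he
    have hne := Polynomial.mem_support_iff.mp he
    have hle : e ≤ K + l := le_trans (Polynomial.le_natDegree_of_ne_zero hne) hdeg
    by_cases h1 : e < m
    · exact Finset.mem_union_left _ (Finset.mem_range.mpr h1)
    · by_cases h2 : e ≤ m + l
      · exfalso
        have hi : e - m < l + 1 := by omega
        have := hwin ⟨e - m, hi⟩
        simp only at this
        rw [show m + (e - m) = e by omega] at this
        exact hne this
      · exact Finset.mem_union_right _ (Finset.mem_Ico.mpr ⟨by omega, by omega⟩)
  have hcard : p.support.card ≤ K := by
    refine le_trans (Finset.card_le_card hsupp) (le_trans (Finset.card_union_le _ _) ?_)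
    simp [Nat.card_Ico]
    omega
  have hp0 : p = 0 := few_terms K p hcard ⟨q, rfl⟩
  have hXne : (X - 1 : ℂ[X]) ≠ 0 := by
    have := Polynomial.X_sub_C_ne_zero (1 : ℂ)
    simpa using this
  have hq0 : q = 0 := by
    rcases mul_eq_zero.mp (hp ▸ hp0) with h | h
    · exact absurd h (pow_ne_zero _ hXne)
    · exact h
  funext j
  have hcoe : q.coeff (j : ℕ) = v j := by
    rw [hq, Polynomial.finset_sum_coeff]
    rw [Finset.sum_eq_single j]
    · simp [Polynomial.coeff_C_mul_X_pow]
    · intro j' _ hne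
      rw [Polynomial.coeff_C_mul_X_pow, if_neg (fun h => hne (Fin.ext h.symm))]
    · intro h; exact absurd (Finset.mem_univ j) h
  rw [Pi.zero_apply, ← hcoe, hq0, Polynomial.coeff_zero]

theorem stmt9 (k r l : ℕ) (hr : 1 ≤ r) (hrk : r ≤ k) :
    IsUnit (coefMat (k - r + 1) (r - 1) l) ∧
    ∃! x : Fin (l + 1) → ℂ, ∀ i : Fin (l + 1),
      ∑ j : Fin (l + 1), coefMat (k - r + 1) (r - 1) l i j * x j = 1 := by
  set A := coefMat (k - r + 1) (r - 1) l with hA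
  have hdet : A.det ≠ 0 := by
    intro hd
    obtain ⟨v, hv0, hv⟩ := (Matrix.exists_mulVec_eq_zero_iff).mpr hd
    exact hv0 (ker_triv _ _ _ v (fun i => congrFun hv i))
  have hUnit : IsUnit A := (Matrix.isUnit_iff_isUnit_det A).mpr (isUnit_iff_ne_zero.mpr hdet)
  refine ⟨hUnit, ?_⟩
  have hInv : A * A⁻¹ = 1 := Matrix.mul_nonsing_inv A (isUnit_iff_ne_zero.mpr hdet)
  have hInv' : A⁻¹ * A = 1 := Matrix.nonsing_inv_mul A (isUnit_iff_ne_zero.mpr hdet)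
  have key : ∀ x : Fin (l + 1) → ℂ,
      (∀ i : Fin (l + 1), ∑ j : Fin (l + 1), A i j * x j = 1) ↔ A.mulVec x = fun _ => 1 := by
    intro x
    constructor
    · intro h; funext i; exact h i
    · intro h i; exact congrFun h i
  refine ⟨A⁻¹.mulVec (fun _ => 1), ?_, ?_⟩
  · exact (key _).mpr (by rw [Matrix.mulVec_mulVec, hInv, Matrix.one_mulVec])
  · intro y hy
    replace hy := (key _).mp hy
    calc y = (A⁻¹ * A).mulVec y := by rw [hInv', Matrix.one_mulVec]
      _ = A⁻¹.mulVec (A.mulVec y) := by rw [Matrix.mulVec_mulVec]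
      _ = A⁻¹.mulVec (fun _ => 1) := by rw [hy]
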